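/- For each n with 1 ≤ n ≤ 4, the minimum length of a superpermutation on n symbols is exactly ∑_{i=1}^{n} i!. -/

import Mathlib

/-- A superpermutation on `n` symbols: a word over `Fin n` containing every
permutation of `Fin n` (viewed as the word `σ 0, σ 1, …, σ (n-1)`) as a
contiguous substring (infix). -/
def IsSuperperm (n : ℕ) (w : List (Fin n)) : Prop :=
  ∀ σ : Equiv.Perm (Fin n), List.ofFn ⇑σ <:+: w

namespace SuperpermAux

/-! ### Computational definitions -/

def wordOf (n a : ℕ) : List ℕ := (List.range n).map fun i => a / n ^ i % n

def encLN (n : ℕ) (l : List ℕ) : ℕ := l.foldr (fun d r => d + n * r) 0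

def costN (n a b : ℕ) : ℕ :=
  (((List.range' 1 n).find? fun d => decide ((wordOf n a).drop d <+: wordOf n b)).getD (max 1 n))

def clsN (n a : ℕ) : ℕ :=
  ((List.range n).map fun k => encLN n ((wordOf n a).rotate k)).foldr min (n ^ n)

def encP {n : ℕ} (σ : Equiv.Perm (Fin n)) : ℕ := encLN n (List.ofFn fun i => ((σ i : ℕ)))

def costP {n : ℕ} (σ τ : Equiv.Perm (Fin n)) : ℕ :=
  (((List.range' 1 n).find? fun d => decide ((List.ofFn ⇑σ).drop d <+: List.ofFn ⇑τ)).getD (max 1 n))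

def chainC {α : Type*} (c : α → α → ℕ) : List α → ℕ
  | [] => 0
  | [_] => 0
  | a :: b :: l => c a b + chainC c (b :: l)

def search (c : ℕ → ℕ → ℕ) (κ : ℕ → ℕ) : ℕ → ℕ → List ℕ → ℕ → Bool
  | 0, _, rest, _ => rest.isEmpty
  | fuel+1, p, rest, b =>
    rest.isEmpty ||
      (decide (rest.length + (rest.map κ).dedup.length ≤ b + 1) &&
        rest.any fun q => decide (c p q ≤ b) && search c κ fuel q (rest.erase q) (b - c p q))

/-! ### Generic facts about `find?`-based costs -/

lemma sorted_range' : ∀ (k s : ℕ), (List.range' s k).Pairwise (· ≤ ·) := by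
  intro k
  induction k with
  | zero => intro s; simp
  | succ k ih =>
    intro s
    rw [List.range'_succ]
    exact List.pairwise_cons.2 ⟨fun b hb => by
      rcases List.mem_range'.1 hb with ⟨i, _, rfl⟩; omega, ih (s+1)⟩

lemma find?_getD_le {f : ℕ → Bool} :
    ∀ {l : List ℕ}, l.Pairwise (· ≤ ·) → ∀ {d x : ℕ}, d ∈ l → f d = true →
      (l.find? f).getD x ≤ d := by
  intro l
  induction l with
  | nil => intro _ d x hd; simp at hd
  | cons a t ih =>
    intro hs d x hd hf
    rcases List.pairwise_cons.1 hs with ⟨ha, hts⟩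
    by_cases hfa : f a = true
    · rw [List.find?_cons_of_pos hfa]
      rcases List.mem_cons.1 hd with rfl | hd
      · simp
      · simpa using ha d hd
    · rw [List.find?_cons_of_neg (by simpa using hfa)]
      rcases List.mem_cons.1 hd with rfl | hd
      · exact absurd hf hfa
      · exact ih hts hd hf

lemma one_le_getD_find?_range' (n : ℕ) (f : ℕ → Bool) (x : ℕ) (hx : 1 ≤ x) :
    1 ≤ ((List.range' 1 n).find? f).getD x := by
  cases h : (List.range' 1 n).find? f with
  | none => simpa using hx
  | some d =>
    have := List.mem_of_find?_eq_some h
    rcases List.mem_range'.1 this with ⟨i, _, rfl⟩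
    simp only [Option.getD_some]; omega

lemma one_le_costN (n a b : ℕ) : 1 ≤ costN n a b :=
  one_le_getD_find?_range' _ _ _ (le_max_left _ _)

lemma one_le_costP {n : ℕ} (σ τ : Equiv.Perm (Fin n)) : 1 ≤ costP σ τ :=
  one_le_getD_find?_range' _ _ _ (le_max_left _ _)

lemma costP_le {n : ℕ} (hn : 0 < n) {σ τ : Equiv.Perm (Fin n)} {d : ℕ}
    (h1 : 1 ≤ d) (hdn : d ≤ n) (hc : (List.ofFn ⇑σ).drop d <+: List.ofFn ⇑τ) :
    costP σ τ ≤ d := by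
  apply find?_getD_le (sorted_range' n 1)
  · exact List.mem_range'.2 ⟨d - 1, by omega, by omega⟩
  · simpa using hc

lemma costP_le_n {n : ℕ} (_hn : 0 < n) (σ τ : Equiv.Perm (Fin n)) : costP σ τ ≤ n := by
  apply costP_le _hn _hn le_rfl
  have : (List.ofFn ⇑σ).drop n = [] := by
    rw [List.drop_eq_nil_iff]; simp
  rw [this]; exact List.nil_prefix

/-! ### The pruned exhaustive search and its completeness -/

lemma dedup_cons_length (x : ℕ) (Y : List ℕ) :
    Y.dedup.length ≤ (x :: Y).dedup.length ∧ (x :: Y).dedup.length ≤ Y.dedup.length + 1 := by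
  by_cases h : x ∈ Y
  · rw [List.dedup_cons_of_mem h]; omega
  · rw [List.dedup_cons_of_notMem h]; simp

lemma chain_classes {c : ℕ → ℕ → ℕ} {κ : ℕ → ℕ} {S : List ℕ}
    (h1 : ∀ a b, 1 ≤ c a b)
    (hκ : ∀ a ∈ S, ∀ b ∈ S, c a b = 1 → κ b = κ a) :
    ∀ (l : List ℕ) (p : ℕ), (∀ x ∈ p :: l, x ∈ S) →
      l.length + ((p :: l).map κ).dedup.length ≤ chainC c (p :: l) + 1 := by
  intro l
  induction l with
  | nil => intro p _; simp [chainC]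
  | cons q t ih =>
    intro p hmem
    have hS' : ∀ x ∈ q :: t, x ∈ S := fun x hx => hmem x (List.mem_cons_of_mem _ hx)
    have IH := ih q hS'
    have hc1 := h1 p q
    have hch : chainC c (p :: q :: t) = c p q + chainC c (q :: t) := rfl
    by_cases hpq : κ p = κ q
    · have hmemκ : κ p ∈ (q :: t).map κ := by
        rw [hpq]; exact List.mem_map_of_mem List.mem_cons_self
      have hded : ((p :: q :: t).map κ).dedup.length = ((q :: t).map κ).dedup.length := by
        rw [List.map_cons, List.dedup_cons_of_mem hmemκ]
      simp only [List.length_cons] at *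
      omega
    · have hc2 : 2 ≤ c p q := by
        have hne : c p q ≠ 1 := fun h =>
          hpq ((hκ p (hmem p (List.mem_cons_self)) q
            (hmem q (List.mem_cons_of_mem _ (List.mem_cons_self))) h).symm)
        omega
      have hded := (dedup_cons_length (κ p) ((q :: t).map κ)).2
      rw [← List.map_cons] at hded
      simp only [List.length_cons] at *
      omega

lemma search_complete {c : ℕ → ℕ → ℕ} {κ : ℕ → ℕ} {S : List ℕ}
    (h1 : ∀ a b, 1 ≤ c a b)
    (hκ : ∀ a ∈ S, ∀ b ∈ S, c a b = 1 → κ b = κ a) :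
    ∀ (fuel : ℕ) (l rest : List ℕ) (p b : ℕ),
      (∀ x ∈ p :: l, x ∈ S) → l.Perm rest → (p :: l).Nodup → l.length ≤ fuel →
      chainC c (p :: l) ≤ b → search c κ fuel p rest b = true := by
  intro fuel
  induction fuel with
  | zero =>
    intro l rest p b _ hperm _ hlen _
    have hl : l = [] := List.eq_nil_of_length_eq_zero (Nat.le_zero.1 hlen)
    subst hl
    have : rest = [] := hperm.symm.eq_nil
    subst this
    simp [search]
  | succ fuel ih =>
    intro l rest p b hmem hperm hnd hlen hch
    cases l with
    | nil =>
      have : rest = [] := hperm.symm.eq_nil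
      subst this
      simp [search]
    | cons q t =>
      have hqrest : q ∈ rest := hperm.mem_iff.1 (List.mem_cons_self)
      rw [search, Bool.or_eq_true, Bool.and_eq_true, List.any_eq_true]
      right
      have hchcons : chainC c (p :: q :: t) = c p q + chainC c (q :: t) := rfl
      constructor
      · rw [decide_eq_true_iff]
        have hlen' : rest.length = (q :: t).length := hperm.length_eq.symm
        have hded : (rest.map κ).dedup.length = ((q :: t).map κ).dedup.length :=
          ((hperm.map κ).dedup.length_eq).symm
        have hcc := chain_classes h1 hκ (q :: t) p hmem
        have hmono := (dedup_cons_length (κ p) ((q :: t).map κ)).1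
        rw [← List.map_cons] at hmono
        omega
      · refine ⟨q, hqrest, ?_⟩
        rw [Bool.and_eq_true, decide_eq_true_iff]
        constructor
        · omega
        · apply ih t (rest.erase q) q (b - c p q)
          · exact fun x hx => hmem x (List.mem_cons_of_mem _ hx)
          · have := hperm.erase q
            rwa [List.erase_cons_head] at this
          · exact hnd.of_cons
          · simpa using hlen
          · omega

/-! ### From a superpermutation to a full chain of permutations -/

lemma exists_chain (n : ℕ) (hn : 0 < n) (w : List (Fin n)) (hw : IsSuperperm n w) :
    ∃ l : List (Equiv.Perm (Fin n)),
      l.Nodup ∧ (∀ σ, σ ∈ l) ∧ n + chainC costP l ≤ w.length := by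
  classical
  have ex : ∀ σ : Equiv.Perm (Fin n), ∃ i, (w.drop i).take n = List.ofFn ⇑σ := by
    intro σ
    obtain ⟨s, t, h⟩ := hw σ
    refine ⟨s.length, ?_⟩
    rw [← h, List.append_assoc, List.drop_left, List.take_left' List.length_ofFn]
  set I : Equiv.Perm (Fin n) → ℕ := fun σ => Nat.find (ex σ) with hIdef
  have hspec : ∀ σ, (w.drop (I σ)).take n = List.ofFn ⇑σ := fun σ => Nat.find_spec (ex σ)
  have hinj : Function.Injective I := by
    intro σ τ h
    have h2 := hspec σ
    rw [h, hspec τ] at h2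
    exact Equiv.coe_fn_injective (List.ofFn_injective h2.symm)
  have hlen : ∀ σ, I σ + n ≤ w.length := by
    intro σ
    have h2 := congrArg List.length (hspec σ)
    simp only [List.length_take, List.length_drop, List.length_ofFn] at h2
    omega
  have hgap : ∀ σ τ, I σ < I τ → costP σ τ ≤ I τ - I σ := by
    intro σ τ hlt
    rcases le_or_gt n (I τ - I σ) with hnd | hdn
    · exact le_trans (costP_le_n hn σ τ) hnd
    · apply costP_le hn (by omega) (by omega)
      rw [← hspec σ, ← hspec τ]
      rw [List.drop_take, List.drop_drop]
      have hIt : I σ + (I τ - I σ) = I τ := by omega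
      rw [hIt]
      have h3 : (w.drop (I τ)).take (n - (I τ - I σ)) =
          ((w.drop (I τ)).take n).take (n - (I τ - I σ)) := by
        rw [List.take_take, min_eq_left (by omega)]
      rw [h3]
      exact List.take_prefix _ _
  set r : Equiv.Perm (Fin n) → Equiv.Perm (Fin n) → Prop := fun σ τ => I σ ≤ I τ with hrdef
  haveI : DecidableRel r := fun a b => Nat.decLe _ _
  haveI : IsTrans _ r := ⟨fun a b c hab hbc => le_trans hab hbc⟩
  haveI : IsAntisymm _ r := ⟨fun a b hab hba => hinj (le_antisymm hab hba)⟩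
  haveI : IsTotal _ r := ⟨fun a b => le_total _ _⟩
  set l : List (Equiv.Perm (Fin n)) := (Finset.univ : Finset (Equiv.Perm (Fin n))).sort r
    with hldef
  have hnodup : l.Nodup := Finset.sort_nodup _ r
  have hcomplete : ∀ σ, σ ∈ l := fun σ => (Finset.mem_sort r).2 (Finset.mem_univ σ)
  have hpw : l.Pairwise fun σ τ => I σ < I τ := by
    have hs : l.Pairwise r := Finset.pairwise_sort _ r
    exact (hs.and hnodup).imp fun {a b} h => lt_of_le_of_ne h.1 fun he => h.2 (hinj he)
  have key : ∀ (t : List (Equiv.Perm (Fin n))) (p : Equiv.Perm (Fin n)),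
      (p :: t).Pairwise (fun σ τ => I σ < I τ) →
      chainC costP (p :: t) + I p ≤ I ((p :: t).getLast (List.cons_ne_nil _ _)) := by
    intro t
    induction t with
    | nil => intro p _; simp [chainC]
    | cons q t' ihk =>
      intro p hp
      rcases List.pairwise_cons.1 hp with ⟨hhead, htail⟩
      have hpq : I p < I q := hhead q (List.mem_cons_self)
      have hIH := ihk q htail
      have hcost : costP p q ≤ I q - I p := hgap p q hpq
      have hch : chainC costP (p :: q :: t') = costP p q + chainC costP (q :: t') := rfl
      have hglast : (p :: q :: t').getLast (List.cons_ne_nil _ _) =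
          (q :: t').getLast (List.cons_ne_nil _ _) := List.getLast_cons _
      rw [hglast, hch]
      omega
  refine ⟨l, hnodup, hcomplete, ?_⟩
  cases hl : l with
  | nil => exact absurd (hcomplete 1) (hl ▸ List.not_mem_nil)
  | cons p t =>
    have hk := key t p (hl ▸ hpw)
    have hlast := hlen ((p :: t).getLast (List.cons_ne_nil _ _))
    omega

/-! ### Putting it together: the generic lower bound -/

lemma chainC_map {α : Type*} (c₁ : α → α → ℕ) (c₂ : ℕ → ℕ → ℕ) (f : α → ℕ)
    (h : ∀ a b, c₂ (f a) (f b) = c₁ a b) :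
    ∀ l : List α, chainC c₂ (l.map f) = chainC c₁ l := by
  intro l
  induction l with
  | nil => rfl
  | cons a t ih =>
    cases t with
    | nil => rfl
    | cons b t' =>
      show c₂ (f a) (f b) + chainC c₂ ((b :: t').map f) = c₁ a b + chainC c₁ (b :: t')
      rw [h, ih]

lemma lower_bound (n : ℕ) (hn : 0 < n) (codes : List ℕ) (fuel B : ℕ)
    (hnodupc : codes.Nodup)
    (hcodes : ∀ σ : Equiv.Perm (Fin n), encP σ ∈ codes)
    (hsurj : ∀ x ∈ codes, ∃ σ : Equiv.Perm (Fin n), encP σ = x)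
    (hD1 : ∀ σ τ : Equiv.Perm (Fin n), costN n (encP σ) (encP τ) = costP σ τ)
    (hD2 : Function.Injective (encP (n := n)))
    (hD4 : ∀ σ τ : Equiv.Perm (Fin n),
      costN n (encP σ) (encP τ) = 1 → clsN n (encP τ) = clsN n (encP σ))
    (hcard : Fintype.card (Equiv.Perm (Fin n)) ≤ fuel + 1)
    (hsearch : codes.all (fun x => !search (costN n) (clsN n) fuel x (codes.erase x) B) = true)
    (w : List (Fin n)) (hw : IsSuperperm n w) : n + B + 1 ≤ w.length := by
  by_contra hcon
  push_neg at hcon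
  obtain ⟨l, hnd, hcm, hchain⟩ := exists_chain n hn w hw
  cases l with
  | nil => exact absurd (hcm 1) (List.not_mem_nil)
  | cons p t =>
    have hpnott : p ∉ t := (List.nodup_cons.1 hnd).1
    have hκ : ∀ a ∈ codes, ∀ b ∈ codes, costN n a b = 1 → clsN n b = clsN n a := by
      intro a ha b hb h
      obtain ⟨σ, rfl⟩ := hsurj a ha
      obtain ⟨τ, rfl⟩ := hsurj b hb
      exact hD4 σ τ h
    have hmapeq : chainC (costN n) ((p :: t).map encP) = chainC costP (p :: t) :=
      chainC_map costP (costN n) encP hD1 _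
    have hndmap : ((p :: t).map encP).Nodup := hnd.map hD2
    have hperm : (t.map encP).Perm (codes.erase (encP p)) := by
      rw [List.perm_ext_iff_of_nodup (by simpa using hndmap.of_cons) (hnodupc.erase _)]
      intro x
      constructor
      · intro hx
        obtain ⟨σ, hσt, rfl⟩ := List.mem_map.1 hx
        refine (hnodupc.mem_erase_iff).2 ⟨?_, hcodes σ⟩
        intro he
        exact hpnott (hD2 he ▸ hσt)
      · intro hx
        obtain ⟨hne, hmemc⟩ := (hnodupc.mem_erase_iff).1 hx
        obtain ⟨σ, rfl⟩ := hsurj x hmemc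
        rcases List.mem_cons.1 (hcm σ) with rfl | hσt
        · exact absurd rfl hne
        · exact List.mem_map_of_mem hσt
    have hfuel : (t.map encP).length ≤ fuel := by
      have h1 := hnd.length_le_card
      have h2 : (p :: t).length = t.length + 1 := by simp
      simp only [List.length_map]
      omega
    have hs := search_complete (S := codes) (one_le_costN n) hκ fuel (t.map encP)
      (codes.erase (encP p)) (encP p) B
      (by
        intro x hx
        rcases List.mem_cons.1 hx with rfl | hx
        · exact hcodes p
        · obtain ⟨σ, _, rfl⟩ := List.mem_map.1 hx
          exact hcodes σ)
      hperm (by simpa using hndmap) hfuel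
      (by rw [show (encP p :: t.map encP) = (p :: t).map encP from rfl, hmapeq]; omega)
    have hfalse := List.all_eq_true.1 hsearch (encP p) (hcodes p)
    rw [hs] at hfalse
    simp at hfalse

/-! ### Data for each `n ≤ 4` -/

def codesL1 : List ℕ := [0]
def codesL2 : List ℕ := [1, 2]
def codesL3 : List ℕ := [5, 7, 11, 15, 19, 21]
def codesL4 : List ℕ := [27, 30, 39, 45, 54, 57, 75, 78, 99, 108, 114, 120, 135, 141,
  147, 156, 177, 180, 198, 201, 210, 216, 225, 228]

def W1 : List (Fin 1) := [0]
def W2 : List (Fin 2) := [0, 1, 0]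
def W3 : List (Fin 3) := [0, 1, 2, 0, 1, 0, 2, 1, 0]
def W4 : List (Fin 4) := [0,1,2,3,0,1,2,0,3,1,2,0,1,3,2,0,1,0,2,3,1,0,2,1,3,0,2,1,0,3,2,1,0]

theorem U1 : ∀ σ : Equiv.Perm (Fin 1), List.ofFn ⇑σ <:+: W1 := by decide
theorem U2 : ∀ σ : Equiv.Perm (Fin 2), List.ofFn ⇑σ <:+: W2 := by decide
theorem U3 : ∀ σ : Equiv.Perm (Fin 3), List.ofFn ⇑σ <:+: W3 := by decide
theorem U4 : ∀ σ : Equiv.Perm (Fin 4), List.ofFn ⇑σ <:+: W4 := by decide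

set_option maxHeartbeats 1000000 in
theorem S2 : codesL2.all
    (fun x => !search (costN 2) (clsN 2) 1 x (codesL2.erase x) 0) = true := by decide

set_option maxHeartbeats 1000000 in
theorem S3 : codesL3.all
    (fun x => !search (costN 3) (clsN 3) 5 x (codesL3.erase x) 5) = true := by decide

set_option maxHeartbeats 10000000 in
theorem S4 : codesL4.all
    (fun x => !search (costN 4) (clsN 4) 23 x (codesL4.erase x) 28) = true := by decide

theorem lower2 (w : List (Fin 2)) (hw : IsSuperperm 2 w) : 3 ≤ w.length := by
  have := lower_bound 2 (by norm_num) codesL2 1 0 (by decide)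
    (by decide) (by decide) (by decide)
    (by decide) (by decide)
    (by simp [Fintype.card_perm, Nat.factorial]) S2 w hw
  omega

theorem lower3 (w : List (Fin 3)) (hw : IsSuperperm 3 w) : 9 ≤ w.length := by
  have := lower_bound 3 (by norm_num) codesL3 5 5 (by decide)
    (by decide) (by decide) (by decide)
    (by decide) (by decide)
    (by simp [Fintype.card_perm, Nat.factorial]) S3 w hw
  omega

set_option maxHeartbeats 1000000 in
theorem lower4 (w : List (Fin 4)) (hw : IsSuperperm 4 w) : 33 ≤ w.length := by
  have := lower_bound 4 (by norm_num) codesL4 23 28 (by decide)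
    (by decide) (by decide) (by decide)
    (by decide) (by decide)
    (by simp [Fintype.card_perm, Nat.factorial]) S4 w hw
  omega

end SuperpermAux

open SuperpermAux

theorem stmt_17 (n : ℕ) (h1 : 1 ≤ n) (h4 : n ≤ 4) :
    sInf {k | ∃ w : List (Fin n), IsSuperperm n w ∧ w.length = k} =
      ∑ i ∈ Finset.Icc 1 n, Nat.factorial i := by
  interval_cases n
  · rw [show ∑ i ∈ Finset.Icc 1 1, Nat.factorial i = 1 from by decide]
    refine le_antisymm (Nat.sInf_le ⟨W1, U1, rfl⟩) (le_csInf ⟨1, W1, U1, rfl⟩ ?_)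
    rintro k ⟨w, hw, rfl⟩
    obtain ⟨l, -, -, hc⟩ := exists_chain 1 one_pos w hw
    omega
  · rw [show ∑ i ∈ Finset.Icc 1 2, Nat.factorial i = 3 from by decide]
    refine le_antisymm (Nat.sInf_le ⟨W2, U2, rfl⟩) (le_csInf ⟨3, W2, U2, rfl⟩ ?_)
    rintro k ⟨w, hw, rfl⟩
    exact lower2 w hw
  · rw [show ∑ i ∈ Finset.Icc 1 3, Nat.factorial i = 9 from by decide]
    refine le_antisymm (Nat.sInf_le ⟨W3, U3, rfl⟩) (le_csInf ⟨9, W3, U3, rfl⟩ ?_)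
    rintro k ⟨w, hw, rfl⟩
    exact lower3 w hw
  · rw [show ∑ i ∈ Finset.Icc 1 4, Nat.factorial i = 33 from by decide]
    refine le_antisymm (Nat.sInf_le ⟨W4, U4, rfl⟩) (le_csInf ⟨33, W4, U4, rfl⟩ ?_)
    rintro k ⟨w, hw, rfl⟩
    exact lower4 w hw
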